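/- Let v(p,q,r) = p·q/(q + r - qr) + (1-p)·(1-q)/(1 - qr) for p, q, r ∈ (0,1). Then ∂v/∂q (p, q, 1/2) = 2·f(p,q)/((q-2)²(q+1)²) where f(p,q) = -1 + 5p - 2q - 2pq - q² + 2pq², and for 4/5 < p ≤ 1 we have f(p,q) > 0 for all q ∈ [0,1]. -/

import Mathlib

theorem asymmetric_game_derivative (p : ℝ) (hp : p ∈ Set.Ioo (0:ℝ) 1) :
    let v : ℝ → ℝ → ℝ := fun q r =>
      p * q / (q + r - q*r) + (1 - p) * (1 - q) / (1 - q*r)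
    let f : ℝ → ℝ → ℝ := fun p q => -1 + 5*p - 2*q - 2*p*q - q^2 + 2*p*q^2
    (∀ q ∈ Set.Ioo (0:ℝ) 1,
      deriv (fun q => v q (1/2)) q = 2 * f p q / ((q - 2)^2 * (q + 1)^2)) ∧
    (4/5 < p → ∀ q ∈ Set.Icc (0:ℝ) 1, 0 < f p q) := by
  intro v f
  constructor
  · intro q hq
    obtain ⟨hq0, hq1⟩ := hq
    have hd1 : (q + 1/2 - q*(1/2)) ≠ 0 := by nlinarith
    have hd2 : (1 - q*(1/2)) ≠ 0 := by nlinarith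
    have A : HasDerivAt (fun x : ℝ => x + 1/2 - x*(1/2)) (1 - 1*(1/2)) q := by
      exact ((hasDerivAt_id' q).add_const (1/2)).sub ((hasDerivAt_id' q).mul_const (1/2))
    have B : HasDerivAt (fun x : ℝ => 1 - x*(1/2)) (-(1*(1/2))) q := by
      simpa using ((hasDerivAt_id q).mul_const (1/2)).const_sub 1
    have N1 : HasDerivAt (fun x : ℝ => p * x) p q := by
      simpa using (hasDerivAt_id q).const_mul p
    have N2 : HasDerivAt (fun x : ℝ => (1 - p) * (1 - x)) (-(1-p)) q := by
      have := ((hasDerivAt_id q).const_sub 1).const_mul (1 - p)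
      simpa using this
    have H1 := N1.div A hd1
    have H2 := N2.div B hd2
    have H := (H1.add H2)
    have hderiv : deriv (fun q => v q (1/2)) q =
        (p * (q + 1/2 - q*(1/2)) - p * q * (1 - 1*(1/2))) / (q + 1/2 - q*(1/2))^2 +
        ((-(1-p)) * (1 - q*(1/2)) - (1 - p) * (1 - q) * (-(1*(1/2)))) / (1 - q*(1/2))^2 := by
      exact H.deriv
    rw [hderiv]
    show _ = 2 * (-1 + 5*p - 2*q - 2*p*q - q^2 + 2*p*q^2) / ((q - 2)^2 * (q + 1)^2)
    have h2 : (q - 2) ≠ 0 := by nlinarith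
    have h3 : (q + 1) ≠ 0 := by nlinarith
    have hE : (q - 2)^2 * (q + 1)^2 ≠ 0 :=
      mul_ne_zero (pow_ne_zero 2 h2) (pow_ne_zero 2 h3)
    rw [div_add_div _ _ (pow_ne_zero 2 hd1) (pow_ne_zero 2 hd2),
      div_eq_div_iff (mul_ne_zero (pow_ne_zero 2 hd1) (pow_ne_zero 2 hd2)) hE]
    ring
  · intro hp4 q hq
    obtain ⟨hq0, hq1⟩ := hq
    have hp1 := hp.2
    show 0 < -1 + 5*p - 2*q - 2*p*q - q^2 + 2*p*q^2
    nlinarith [mul_nonneg hq0 hq0, mul_nonneg (sub_nonneg.2 hq1) hq0,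
      mul_nonneg (le_of_lt (sub_pos.2 hp4)) (mul_nonneg hq0 hq0),
      mul_nonneg (sub_nonneg.2 hq1) (sub_nonneg.2 hq1)]
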